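/- Monotonicity of the relative Walkup-Wets distance: if A, B ⊆ ℝⁿ are nonempty and B(x,r) ⊆ B(y,s), then D^{x,r}[A,B] ≤ (s/r) D^{y,s}[A,B]. -/

import Mathlib

open Metric Set Filter Topology Pointwise

noncomputable section

/-- Excess of `A` over `B`: `sup_{a ∈ A} inf_{b ∈ B} |a - b|` (extended-real valued). -/
def ex {n : ℕ} (A B : Set (EuclideanSpace ℝ (Fin n))) : ENNReal :=
  ⨆ a ∈ A, EMetric.infEdist a B

/-- Relative excess of `A` in the closed ball `B(x,r)` over `B`. -/
def relEx {n : ℕ} (x : EuclideanSpace ℝ (Fin n)) (r : ℝ)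
    (A B : Set (EuclideanSpace ℝ (Fin n))) : ℝ :=
  (ex (A ∩ closedBall x r) B).toReal / r

/-- Relative Walkup–Wets distance in `B(x,r)`. -/
def WW {n : ℕ} (x : EuclideanSpace ℝ (Fin n)) (r : ℝ)
    (A B : Set (EuclideanSpace ℝ (Fin n))) : ℝ :=
  max (relEx x r A B) (relEx x r B A)

lemma ex_mono_left {n : ℕ} {A A' B : Set (EuclideanSpace ℝ (Fin n))} (h : A ⊆ A') :
    ex A B ≤ ex A' B :=
  iSup₂_le fun a ha => le_iSup₂_of_le a (h ha) le_rfl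

lemma ex_ne_top {n : ℕ} {B : Set (EuclideanSpace ℝ (Fin n))} (hB : B.Nonempty)
    (A : Set (EuclideanSpace ℝ (Fin n))) (y : EuclideanSpace ℝ (Fin n)) (s : ℝ) :
    ex (A ∩ closedBall y s) B ≠ ⊤ := by
  obtain ⟨b, hb⟩ := hB
  have : ex (A ∩ closedBall y s) B ≤ ENNReal.ofReal s + edist y b := by
    refine iSup₂_le fun a ha => ?_
    calc EMetric.infEdist a B ≤ edist a b := EMetric.infEdist_le_edist_of_mem hb
      _ ≤ edist a y + edist y b := edist_triangle _ _ _
      _ ≤ ENNReal.ofReal s + edist y b := by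
          gcongr
          rw [edist_dist]
          exact ENNReal.ofReal_le_ofReal ha.2
  exact ne_top_of_le_ne_top (by simp [edist_ne_top]) this

lemma relEx_nonneg {n : ℕ} (x : EuclideanSpace ℝ (Fin n)) (r : ℝ)
    (A B : Set (EuclideanSpace ℝ (Fin n))) (hr : 0 ≤ r) : 0 ≤ relEx x r A B :=
  div_nonneg ENNReal.toReal_nonneg hr

/-- Monotonicity of the relative Walkup–Wets distance. -/
theorem WW_mono {n : ℕ} (A B : Set (EuclideanSpace ℝ (Fin n)))
    (hA : A.Nonempty) (hB : B.Nonempty) (x y : EuclideanSpace ℝ (Fin n)) (r s : ℝ)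
    (hr : 0 < r) (hsub : closedBall x r ⊆ closedBall y s) :
    WW x r A B ≤ (s / r) * WW y s A B := by
  have hxmem : x ∈ closedBall y s := hsub (mem_closedBall_self hr.le)
  have hs0 : 0 ≤ s := le_trans dist_nonneg (mem_closedBall.mp hxmem)
  by_cases hsing : Subsingleton (EuclideanSpace ℝ (Fin n))
  · -- everything is trivial
    have hex : ∀ (C D : Set (EuclideanSpace ℝ (Fin n))), D.Nonempty → ex C D = 0 := by
      intro C D hD
      obtain ⟨d, hd⟩ := hD
      refine le_antisymm (iSup₂_le fun a _ => ?_) zero_le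
      have : a = d := Subsingleton.elim a d
      rw [this]; exact (EMetric.infEdist_zero_of_mem hd).le
    have h1 : WW x r A B = 0 := by
      simp [WW, relEx, hex _ _ hB, hex _ _ hA]
    have h2 : 0 ≤ WW y s A B :=
      le_max_of_le_left (relEx_nonneg _ _ _ _ hs0)
    rw [h1]
    positivity
  · have : Nontrivial (EuclideanSpace ℝ (Fin n)) := not_subsingleton_iff_nontrivial.mp hsing
    have hspos : 0 < s := by
      rcases lt_or_eq_of_le hs0 with h | h
      · exact h
      · exfalso
        obtain ⟨v, hv⟩ := exists_ne (0 : EuclideanSpace ℝ (Fin n))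
        set z := x + (r / ‖v‖) • v with hz
        have hzx : z ≠ x := by
          simp only [hz, ne_eq, add_eq_left, smul_eq_zero, not_or]
          constructor
          · exact div_ne_zero hr.ne' (norm_ne_zero_iff.mpr hv)
          · exact hv
        have hzball : z ∈ closedBall x r := by
          rw [mem_closedBall, dist_eq_norm]
          simp only [hz, add_sub_cancel_left]
          rw [norm_smul, norm_div, Real.norm_eq_abs, abs_of_pos hr, Real.norm_eq_abs,
            abs_of_pos (norm_pos_iff.mpr hv)]
          rw [div_mul_cancel₀ _ (norm_ne_zero_iff.mpr hv)]
        have h1 : z = y := by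
          have := hsub hzball
          rw [← h, mem_closedBall, dist_le_zero] at this
          exact this
        have h2 : x = y := by
          rw [← h, mem_closedBall, dist_le_zero] at hxmem
          exact hxmem
        exact hzx (h1.trans h2.symm)
    -- main case
    have key : ∀ (C D : Set (EuclideanSpace ℝ (Fin n))), D.Nonempty →
        relEx x r C D ≤ (s / r) * relEx y s C D := by
      intro C D hD
      have hsubset : C ∩ closedBall x r ⊆ C ∩ closedBall y s :=
        inter_subset_inter_right _ hsub
      have hle : (ex (C ∩ closedBall x r) D).toReal ≤ (ex (C ∩ closedBall y s) D).toReal :=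
        ENNReal.toReal_mono (ex_ne_top hD C y s) (ex_mono_left hsubset)
      have h1 : relEx x r C D ≤ (ex (C ∩ closedBall y s) D).toReal / r := by
        unfold relEx
        gcongr
      have h2 : (ex (C ∩ closedBall y s) D).toReal / r = (s / r) * relEx y s C D := by
        unfold relEx
        field_simp
      rw [← h2]
      exact h1
    have hsr : 0 ≤ s / r := div_nonneg hs0 hr.le
    refine max_le ?_ ?_
    · exact le_trans (key A B hB) (mul_le_mul_of_nonneg_left (le_max_left _ _) hsr)
    · exact le_trans (key B A hA) (mul_le_mul_of_nonneg_left (le_max_right _ _) hsr)
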